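/- Positive semidefiniteness of the knockoff Gram matrix: let Σ ∈ ℝ^{p×p} be a symmetric positive definite matrix and s ∈ ℝ^p. Then the 2p×2p block matrix G = [[Σ, Σ − diag{s}], [Σ − diag{s}, Σ]] is positive semidefinite if and only if s_j ≥ 0 for all j and 2Σ − diag{s} is positive semidefinite; equivalently, G is positive semidefinite if and only if the Schur complement A = 2·diag{s} − diag{s}·Σ⁻¹·diag{s} is positive semidefinite. -/

import Mathlib

open Matrix

variable {p : ℕ}

lemma psd_smul {n : Type*} [Fintype n] {M : Matrix n n ℝ} (hM : M.PosSemidef)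
    {c : ℝ} (hc : 0 ≤ c) : (c • M).PosSemidef := by
  refine posSemidef_iff_dotProduct_mulVec.2 ⟨by rw [IsHermitian, conjTranspose_smul, hM.1, star_trivial], fun x => ?_⟩
  have h := (posSemidef_iff_dotProduct_mulVec.1 hM).2 x
  rw [smul_mulVec, dotProduct_smul, smul_eq_mul]
  exact mul_nonneg hc h

lemma psd_blockDiag_iff {A B : Matrix (Fin p) (Fin p) ℝ} :
    (Matrix.fromBlocks A 0 0 B).PosSemidef ↔ A.PosSemidef ∧ B.PosSemidef := by
  constructor
  · intro h
    have hH := h.1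
    rw [isHermitian_fromBlocks_iff] at hH
    refine ⟨posSemidef_iff_dotProduct_mulVec.2 ⟨hH.1, fun x => ?_⟩, posSemidef_iff_dotProduct_mulVec.2 ⟨hH.2.2.2, fun x => ?_⟩⟩
    · have := (posSemidef_iff_dotProduct_mulVec.1 h).2 (Sum.elim x 0)
      simpa [fromBlocks_mulVec, sumElim_dotProduct_sumElim] using this
    · have := (posSemidef_iff_dotProduct_mulVec.1 h).2 (Sum.elim 0 x)
      simpa [fromBlocks_mulVec, sumElim_dotProduct_sumElim] using this
  · rintro ⟨hA, hB⟩
    refine posSemidef_iff_dotProduct_mulVec.2 ⟨isHermitian_fromBlocks_iff.2 ⟨hA.1, by simp, by simp, hB.1⟩, fun x => ?_⟩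
    have hx : x = Sum.elim (x ∘ Sum.inl) (x ∘ Sum.inr) := by ext (i | i) <;> rfl
    rw [hx, fromBlocks_mulVec]
    simp only [zero_mulVec, add_zero, zero_add]
    rw [show star (Sum.elim (x ∘ Sum.inl) (x ∘ Sum.inr))
        = Sum.elim (star (x ∘ Sum.inl)) (star (x ∘ Sum.inr)) by ext (i | i) <;> rfl,
      sumElim_dotProduct_sumElim]
    exact add_nonneg ((posSemidef_iff_dotProduct_mulVec.1 hA).2 _) ((posSemidef_iff_dotProduct_mulVec.1 hB).2 _)

theorem knockoff_gram_posSemidef_iff {p : ℕ}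
    (Sgm : Matrix (Fin p) (Fin p) ℝ) (hSgm : Sgm.PosDef) (s : Fin p → ℝ)
    (G : Matrix (Fin p ⊕ Fin p) (Fin p ⊕ Fin p) ℝ)
    (hG : G = Matrix.fromBlocks Sgm (Sgm - Matrix.diagonal s)
        (Sgm - Matrix.diagonal s) Sgm) :
    (G.PosSemidef ↔ (∀ j, 0 ≤ s j) ∧ ((2 : ℝ) • Sgm - Matrix.diagonal s).PosSemidef)
      ∧
    (G.PosSemidef ↔
      ((2 : ℝ) • Matrix.diagonal s - Matrix.diagonal s * Sgm⁻¹ * Matrix.diagonal s).PosSemidef) := by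
  set D := Matrix.diagonal s with hD
  set P : Matrix (Fin p ⊕ Fin p) (Fin p ⊕ Fin p) ℝ := Matrix.fromBlocks 1 1 1 (-1) with hP
  have hPH : Pᴴ = P := by
    rw [hP]
    ext (i | i) (j | j) <;>
      simp [conjTranspose_apply, Matrix.one_apply, eq_comm]
  have hDH : Dᴴ = D := by simp [hD, diagonal_conjTranspose, star]
  have hSH : Sgmᴴ = Sgm := hSgm.1
  set H : Matrix (Fin p ⊕ Fin p) (Fin p ⊕ Fin p) ℝ :=
    Matrix.fromBlocks ((2 : ℝ) • Sgm - D) 0 0 D with hH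
  have hPGP : P * G * P = (2 : ℝ) • H := by
    rw [hG, hP, hH, Matrix.fromBlocks_multiply, Matrix.fromBlocks_multiply,
      Matrix.fromBlocks_smul]
    rw [Matrix.fromBlocks_inj]
    refine ⟨?_, ?_, ?_, ?_⟩ <;>
      · simp only [Matrix.one_mul, Matrix.mul_one, Matrix.neg_mul, Matrix.mul_neg,
          Matrix.zero_mul, Matrix.mul_zero, add_zero, zero_add, smul_zero]
        module
  have hPHP : P * H * P = (2 : ℝ) • G := by
    rw [hG, hP, hH, Matrix.fromBlocks_multiply, Matrix.fromBlocks_multiply,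
      Matrix.fromBlocks_smul]
    rw [Matrix.fromBlocks_inj]
    refine ⟨?_, ?_, ?_, ?_⟩ <;>
      · simp only [Matrix.one_mul, Matrix.mul_one, Matrix.neg_mul, Matrix.mul_neg,
          Matrix.zero_mul, Matrix.mul_zero, add_zero, zero_add, smul_zero]
        module
  have key : G.PosSemidef ↔ H.PosSemidef := by
    constructor
    · intro hGpsd
      have h1 : (P * G * Pᴴ).PosSemidef := hGpsd.mul_mul_conjTranspose_same P
      rw [hPH, hPGP] at h1
      have := psd_smul h1 (c := (1:ℝ)/2) (by norm_num)
      simpa [smul_smul] using this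
    · intro hHpsd
      have h1 : (P * H * Pᴴ).PosSemidef := hHpsd.mul_mul_conjTranspose_same P
      rw [hPH, hPHP] at h1
      have := psd_smul h1 (c := (1:ℝ)/2) (by norm_num)
      simpa [smul_smul] using this
  have first : G.PosSemidef ↔ (∀ j, 0 ≤ s j) ∧ ((2 : ℝ) • Sgm - D).PosSemidef := by
    rw [key, hH, psd_blockDiag_iff, hD, posSemidef_diagonal_iff]
    tauto
  refine ⟨first, ?_⟩
  -- second equivalence via Schur complement
  haveI : Invertible Sgm := hSgm.isUnit.invertible
  have hdet : IsUnit Sgm.det := (Matrix.isUnit_iff_isUnit_det Sgm).1 hSgm.isUnit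
  have hBH : (Sgm - D)ᴴ = Sgm - D := by rw [conjTranspose_sub, hSH, hDH]
  have schur := Matrix.PosDef.fromBlocks₁₁ (A := Sgm) (Sgm - D) Sgm hSgm
  rw [hBH] at schur
  rw [hG, schur]
  have halg : Sgm - (Sgm - D) * Sgm⁻¹ * (Sgm - D) = (2 : ℝ) • D - D * Sgm⁻¹ * D := by
    have h1 : Sgm * Sgm⁻¹ = 1 := Matrix.mul_nonsing_inv Sgm hdet
    have h2 : Sgm⁻¹ * Sgm = 1 := Matrix.nonsing_inv_mul Sgm hdet
    rw [Matrix.mul_sub, Matrix.sub_mul, Matrix.sub_mul, Matrix.sub_mul, h1,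
      Matrix.mul_assoc D Sgm⁻¹ Sgm, h2]
    simp only [Matrix.one_mul, Matrix.mul_one]
    module
  rw [halg]
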